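/- Let f be a fully closed ring-like continuous map from a compact Hausdorff space X onto a non-degenerate continuum Y. Then every Gδ partition in X (a closed Gδ-set disconnecting X) contains some fiber f⁻¹(y). -/

import Mathlib

open Set Topology

variable {X Y : Type*} [TopologicalSpace X] [TopologicalSpace Y]

/-- A map is fully closed if images of disjoint closed sets meet in a discrete subspace. -/
def IsFullyClosedMap (f : X → Y) : Prop :=
  ∀ F G : Set X, IsClosed F → IsClosed G → Disjoint F G →
    DiscreteTopology ↥(f '' F ∩ f '' G)

/-- A map is ring-like if every neighborhood pair admits a smaller neighborhood of the image
point whose frontier has preimage inside the given neighborhood of the point. -/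
def IsRingLike (f : X → Y) : Prop :=
  ∀ x : X, ∀ U : Set X, ∀ V : Set Y, IsOpen U → x ∈ U → IsOpen V → f x ∈ V →
    ∃ V' : Set Y, IsOpen V' ∧ f x ∈ V' ∧ V' ⊆ V ∧ f ⁻¹' (frontier V') ⊆ U

/-- A subcontinuum: a compact connected subset. -/
def IsSubcontinuum (A : Set X) : Prop := IsCompact A ∧ IsConnected A

/-- A terminal subcontinuum. -/
def IsTerminalSubcontinuum (A : Set X) : Prop :=
  IsSubcontinuum A ∧ ∀ B : Set X, IsSubcontinuum B → A ∩ B = ∅ ∨ A ⊆ B ∨ B ⊆ A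

/-- An atomic map: point-inverses (of points in the range) are terminal subcontinua. -/
def IsAtomicMap (f : X → Y) : Prop :=
  ∀ y ∈ Set.range f, IsTerminalSubcontinuum (f ⁻¹' {y})

/-- `L` is a partition in `X` between `A` and `B`. -/
def IsPartitionBetween (L A B : Set X) : Prop :=
  IsClosed L ∧ ∃ U V : Set X, IsOpen U ∧ IsOpen V ∧ Disjoint U V ∧
    Lᶜ = U ∪ V ∧ A ⊆ U ∧ B ⊆ V

/-- Covering dimension at most `n`. -/
def CovDimLE (X : Type*) [TopologicalSpace X] (n : ℕ) : Prop :=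
  ∀ (k : ℕ) (U : Fin k → Set X), (∀ i, IsOpen (U i)) → (⋃ i, U i) = Set.univ →
    ∃ (m : ℕ) (V : Fin m → Set X), (∀ j, IsOpen (V j)) ∧ (⋃ j, V j) = Set.univ ∧
      (∀ j, ∃ i, V j ⊆ U i) ∧ ∀ x : X, Set.ncard {j | x ∈ V j} ≤ n + 1

/-- `IndLE n X` means the small inductive dimension of `X` is at most `n - 1`;
in particular `IndLE 0 X` means `X` is empty. -/
def IndLE : ℕ → (X : Type u) → [TopologicalSpace X] → Prop
  | 0, X, _ => IsEmpty X
  | n+1, X, _ => ∀ (x : X) (V : Set X), IsOpen V → x ∈ V →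
      ∃ U : Set X, IsOpen U ∧ x ∈ U ∧ U ⊆ V ∧ IndLE n ↥(frontier U)



section AuxLemmas

variable {Z : Type*} [TopologicalSpace Z]

/-- `y` admits arbitrarily small open neighborhoods whose frontier lies in `A`. -/
def HasSmallFrontierIn (A : Set Z) (y : Z) : Prop :=
  ∀ W : Set Z, IsOpen W → y ∈ W → ∃ V : Set Z, IsOpen V ∧ y ∈ V ∧ V ⊆ W ∧ frontier V ⊆ A

lemma HasSmallFrontierIn.mem_closure [T1Space Z] [ConnectedSpace Z] [Nontrivial Z]
    {A : Set Z} (hA : IsOpen A) {y : Z} (h : HasSmallFrontierIn A y) :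
    y ∈ closure A := by
  by_contra hy
  obtain ⟨z, hz⟩ := exists_ne y
  have hWo : IsOpen ((closure A)ᶜ ∩ {z}ᶜ) :=
    isClosed_closure.isOpen_compl.inter isOpen_compl_singleton
  obtain ⟨V, hVo, hyV, hVW, hVf⟩ := h _ hWo ⟨hy, by simpa using hz.symm⟩
  have hfe : frontier V = ∅ := by
    apply eq_empty_of_subset_empty
    intro w hw
    have h1 : w ∈ A := hVf hw
    have h2 : w ∈ closure ((closure A)ᶜ) := by
      have hsub : closure V ⊆ closure ((closure A)ᶜ ∩ {z}ᶜ) := closure_mono hVW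
      exact closure_mono inter_subset_left (hsub (frontier_subset_closure hw))
    rw [closure_compl] at h2
    exact absurd (interior_maximal subset_closure hA h1) h2
  have hclop : IsClopen V := isClopen_iff_frontier_eq_empty.mpr hfe
  rcases isClopen_iff.mp hclop with h0 | h1
  · rw [h0] at hyV; exact hyV
  · exact (hVW (h1 ▸ mem_univ z)).2 rfl

lemma end2_aux [T1Space Z] [ConnectedSpace Z] {A B : Set Z} (hA : IsOpen A) (hB : IsOpen B)
    (hd : Disjoint A B) (hcov : closure A ∪ closure B = univ) (hAne : A.Nonempty)
    {s₀ : Z} (hs₀B : s₀ ∈ closure B) (hs₀nB : s₀ ∉ B)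
    {W₀ : Set Z} (hW₀ : IsOpen W₀) (hs₀W₀ : s₀ ∈ W₀)
    (hiso : closure A ∩ closure B ∩ W₀ ⊆ {s₀})
    (hPA : HasSmallFrontierIn A s₀) : False := by
  have hdBA : Disjoint (closure B) A := hd.symm.closure_left hA
  obtain ⟨V₁, hV₁o, hs₀V₁, hV₁W₀, hV₁f⟩ := hPA W₀ hW₀ hs₀W₀
  obtain ⟨q, hqV₁, hqB⟩ := mem_closure_iff.mp hs₀B V₁ hV₁o hs₀V₁
  have hqs : q ≠ s₀ := fun h => hs₀nB (h ▸ hqB)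
  obtain ⟨V₂, hV₂o, hs₀V₂, hV₂sub, hV₂f⟩ := hPA (V₁ ∩ {q}ᶜ)
      (hV₁o.inter isOpen_compl_singleton) ⟨hs₀V₁, by simpa using hqs.symm⟩
  have hBV₁ : closure B ∩ V₁ = closure B ∩ closure V₁ := by
    apply subset_antisymm (inter_subset_inter_right _ subset_closure)
    rintro x ⟨hxB, hxV₁⟩
    rcases em (x ∈ V₁) with h | h
    · exact ⟨hxB, h⟩
    · have hfr : x ∈ frontier V₁ := ⟨hxV₁, by rwa [hV₁o.interior_eq]⟩
      exact absurd (hV₁f hfr) (disjoint_left.mp hdBA hxB)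
  set D : Set Z := (closure B ∩ V₁) \ V₂ with hD
  have hqD : q ∈ D := ⟨⟨subset_closure hqB, hqV₁⟩, fun h => (hV₂sub h).2 rfl⟩
  have hDclosed : IsClosed D := by
    have hDeq : D = (closure B ∩ closure V₁) \ V₂ := by rw [hD, hBV₁]
    rw [hDeq]
    exact (isClosed_closure.inter isClosed_closure).sdiff hV₂o
  have hDopen : IsOpen D := by
    rw [isOpen_iff_forall_mem_open]
    intro d hdD
    have hds : d ≠ s₀ := fun h => hdD.2 (h ▸ hs₀V₂)
    have hdnA : d ∉ closure A := fun hdA =>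
      hds (hiso ⟨⟨hdA, hdD.1.1⟩, hV₁W₀ hdD.1.2⟩)
    have hdnV₂ : d ∉ closure V₂ := by
      intro hdV₂
      rcases em (d ∈ V₂) with h | h
      · exact hdD.2 h
      · have hfr : d ∈ frontier V₂ := ⟨hdV₂, by rwa [hV₂o.interior_eq]⟩
        exact hdnA (subset_closure (hV₂f hfr))
    refine ⟨V₁ ∩ (closure V₂)ᶜ ∩ (closure A)ᶜ, ?_, ?_, ?_⟩
    · intro x hx
      have hxB : x ∈ closure B := by
        rcases (hcov ▸ mem_univ x : x ∈ closure A ∪ closure B) with h | h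
        · exact absurd h hx.2
        · exact h
      exact ⟨⟨hxB, hx.1.1⟩, fun h => hx.1.2 (subset_closure h)⟩
    · exact (hV₁o.inter isClosed_closure.isOpen_compl).inter isClosed_closure.isOpen_compl
    · exact ⟨⟨hdD.1.2, hdnV₂⟩, hdnA⟩
  rcases isClopen_iff.mp ⟨hDclosed, hDopen⟩ with h0 | h1
  · rw [h0] at hqD; exact hqD
  · obtain ⟨a, ha⟩ := hAne
    exact disjoint_left.mp hdBA (h1 ▸ mem_univ a : a ∈ D).1.1 ha

lemma exists_isolated_pt {Z : Type*} [TopologicalSpace Z] [T2Space Z]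
    {S : Set Z} (hcpt : IsCompact S) (hcnt : S.Countable)
    (hne : S.Nonempty) : ∃ s ∈ S, ∃ W : Set Z, IsOpen W ∧ S ∩ W = {s} := by
  haveI : CompactSpace S := isCompact_iff_compactSpace.mp hcpt
  haveI : Countable S := hcnt.to_subtype
  haveI : Nonempty S := hne.to_subtype
  have hcover : (⋃ s : S, ({s} : Set S)) = univ := by
    ext x; simp
  obtain ⟨s, hs⟩ := nonempty_interior_of_iUnion_of_closed
      (fun s : S => isClosed_singleton) hcover
  have hop : IsOpen ({s} : Set S) := by
    have h1 : interior ({s} : Set S) = {s} := by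
      apply subset_antisymm interior_subset
      obtain ⟨x, hx⟩ := hs
      have hxs : x = s := mem_singleton_iff.mp (interior_subset hx : x ∈ ({s} : Set S))
      rw [hxs] at hx
      exact singleton_subset_iff.mpr hx
    rw [← h1]; exact isOpen_interior
  obtain ⟨W, hWo, hWp⟩ := isOpen_induced_iff.mp hop
  refine ⟨s, s.2, W, hWo, ?_⟩
  apply subset_antisymm
  · rintro x ⟨hxS, hxW⟩
    have hmem : (⟨x, hxS⟩ : S) ∈ Subtype.val ⁻¹' W := hxW
    rw [hWp] at hmem
    exact congrArg Subtype.val hmem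
  · rintro x hx
    rw [mem_singleton_iff] at hx; subst hx
    have hmem : s ∈ Subtype.val ⁻¹' W := by rw [hWp]; exact rfl
    exact ⟨s.2, hmem⟩

end AuxLemmas

lemma fc_finite {X Y : Type*} [TopologicalSpace X] [TopologicalSpace Y]
    [CompactSpace X] [T2Space Y] {f : X → Y} (hf : Continuous f)
    (hfc : ∀ F G : Set X, IsClosed F → IsClosed G → Disjoint F G →
      DiscreteTopology ↥(f '' F ∩ f '' G))
    {F G : Set X} (hF : IsClosed F) (hG : IsClosed G)
    (hFG : Disjoint F G) : (f '' F ∩ f '' G).Finite := by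
  have hcpt : IsCompact (f '' F ∩ f '' G) :=
    (hF.isCompact.image hf).inter_right (hG.isCompact.image hf).isClosed
  exact hcpt.finite ⟨hfc F G hF hG hFG⟩


theorem statement13 {X Y : Type*} [TopologicalSpace X] [TopologicalSpace Y]
    [CompactSpace X] [T2Space X]
    [CompactSpace Y] [T2Space Y] [ConnectedSpace Y] [Nontrivial Y]
    (f : X → Y) (hf : Continuous f) (hsurj : Function.Surjective f)
    (hfc : IsFullyClosedMap f) (hr : IsRingLike f) :
    ∀ L : Set X, IsClosed L → IsGδ L → ¬ IsPreconnected (Lᶜ : Set X) →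
      ∃ y : Y, f ⁻¹' {y} ⊆ L := by
  intro L hLc hLgd hLpc
  by_contra hgoal
  push_neg at hgoal
  have hstar : ∀ y : Y, ∃ x, f x = y ∧ x ∉ L := by
    intro y
    obtain ⟨x, hx1, hx2⟩ := not_subset.mp (hgoal y)
    exact ⟨x, hx1, hx2⟩
  -- separation of Lᶜ
  have hLo : IsOpen Lᶜ := hLc.isOpen_compl
  rw [IsPreconnected] at hLpc
  push_neg at hLpc
  obtain ⟨u, v, hu, hv, hcup, hune, hvne, hcap⟩ := hLpc
  set U₀ : Set X := Lᶜ ∩ u with hU₀def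
  set V₀ : Set X := Lᶜ ∩ v with hV₀def
  have hU₀o : IsOpen U₀ := hLo.inter hu
  have hV₀o : IsOpen V₀ := hLo.inter hv
  have hUV : Disjoint U₀ V₀ := by
    rw [disjoint_left]
    rintro x ⟨hx1, hx2⟩ ⟨hx3, hx4⟩
    have : x ∈ Lᶜ ∩ (u ∩ v) := ⟨hx1, hx2, hx4⟩
    rw [hcap] at this
    exact this
  have hcomp : Lᶜ = U₀ ∪ V₀ := by
    apply subset_antisymm
    · intro x hx
      rcases hcup hx with h | h
      · exact Or.inl ⟨hx, h⟩
      · exact Or.inr ⟨hx, h⟩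
    · rintro x (h | h) <;> exact h.1
  -- the two open sets of fibers
  set A : Set Y := {y | f ⁻¹' {y} ⊆ U₀} with hAdef
  set B : Set Y := {y | f ⁻¹' {y} ⊆ V₀} with hBdef
  have himg : ∀ O : Set X, IsOpen O → IsOpen {y | f ⁻¹' {y} ⊆ O} := by
    intro O hO
    have heq : {y | f ⁻¹' {y} ⊆ O} = (f '' Oᶜ)ᶜ := by
      ext y
      simp only [mem_setOf_eq, mem_compl_iff, mem_image, not_exists, not_and]
      constructor
      · intro h x hxO hxy
        exact hxO (h (show x ∈ f ⁻¹' {y} by rw [mem_preimage, hxy]; rfl))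
      · intro h x hx
        by_contra hxO
        exact h x hxO (mem_singleton_iff.mp hx)
    rw [heq]
    exact (((hO.isClosed_compl).isCompact.image hf).isClosed).isOpen_compl
  have hAo : IsOpen A := himg U₀ hU₀o
  have hBo : IsOpen B := himg V₀ hV₀o
  have hABd : Disjoint A B := by
    rw [disjoint_left]
    intro y hyA hyB
    obtain ⟨x, hx⟩ := hsurj y
    have hxy : x ∈ f ⁻¹' {y} := by rw [mem_preimage, hx]; rfl
    exact disjoint_left.mp hUV (hyA hxy) (hyB hxy)
  -- ring-like gives small frontiers
  have hPA : ∀ y : Y, ∀ x : X, f x = y → x ∈ U₀ → HasSmallFrontierIn A y := by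
    intro y x hxy hxU W hWo hyW
    obtain ⟨V', hV'o, hfxV', hV'W, hV'pre⟩ := hr x U₀ W hU₀o hxU hWo (by rw [hxy]; exact hyW)
    refine ⟨V', hV'o, by rwa [hxy] at hfxV', hV'W, ?_⟩
    intro z hz x' hx'
    exact hV'pre (by rw [mem_preimage, mem_singleton_iff.mp hx']; exact hz)
  have hPB : ∀ y : Y, ∀ x : X, f x = y → x ∈ V₀ → HasSmallFrontierIn B y := by
    intro y x hxy hxV W hWo hyW
    obtain ⟨V', hV'o, hfxV', hV'W, hV'pre⟩ := hr x V₀ W hV₀o hxV hWo (by rw [hxy]; exact hyW)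
    refine ⟨V', hV'o, by rwa [hxy] at hfxV', hV'W, ?_⟩
    intro z hz x' hx'
    exact hV'pre (by rw [mem_preimage, mem_singleton_iff.mp hx']; exact hz)
  have h1 : ∀ y : Y, HasSmallFrontierIn A y ∨ HasSmallFrontierIn B y := by
    intro y
    obtain ⟨x, hxy, hxL⟩ := hstar y
    rcases (hcomp ▸ hxL : x ∈ U₀ ∪ V₀) with h | h
    · exact Or.inl (hPA y x hxy h)
    · exact Or.inr (hPB y x hxy h)
  have hclAB : Disjoint (closure A) B := hABd.closure_left hBo
  have hclBA : Disjoint (closure B) A := hABd.symm.closure_left hAo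
  have hcov : closure A ∪ closure B = univ := by
    apply eq_univ_of_forall
    intro y
    rcases h1 y with h | h
    · exact Or.inl (h.mem_closure hAo)
    · exact Or.inr (h.mem_closure hBo)
  -- Gδ structure of L
  obtain ⟨T, hTo, hTc, hTeq⟩ := hLgd
  rcases T.eq_empty_or_nonempty with hTe | hTne
  · rw [hTe, sInter_empty] at hTeq
    obtain ⟨x0, hx0⟩ := hune
    have hx0' : x0 ∈ Lᶜ := (hx0 : x0 ∈ Lᶜ ∩ u).1
    rw [hTeq] at hx0'
    exact hx0' (mem_univ x0)
  obtain ⟨g, hg⟩ := hTc.exists_eq_range hTne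
  have hgo : ∀ n, IsOpen (g n) := fun n => hTo _ (hg ▸ mem_range_self n)
  set W : ℕ → Set X := fun n => ⋂ k ∈ Finset.range (n+1), g k with hWdef
  have hWo : ∀ n, IsOpen (W n) := fun n => isOpen_biInter_finset (fun k _ => hgo k)
  have hLiInter : L = ⋂ n, g n := by rw [hTeq, hg, sInter_range]
  have hLW : ∀ n, L ⊆ W n := by
    intro n x hx
    rw [hLiInter, mem_iInter] at hx
    exact mem_biInter fun k _ => hx k
  have hWg : ∀ n, W n ⊆ g n := fun n => biInter_subset_of_mem (Finset.self_mem_range_succ n)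
  have hWanti : ∀ m n : ℕ, m ≤ n → W n ⊆ W m := by
    intro m n hmn x hx
    rw [hWdef, mem_iInter₂] at hx ⊢
    intro k hk
    exact hx k (Finset.mem_range.mpr (lt_of_lt_of_le (Finset.mem_range.mp hk) (by omega)))
  have hnotL : ∀ x, x ∉ L → ∃ n, x ∉ W n := by
    intro x hx
    rw [hLiInter, mem_iInter] at hx
    push_neg at hx
    obtain ⟨n, hn⟩ := hx
    exact ⟨n, fun h => hn (hWg n h)⟩
  -- closures of U₀ V₀ meet inside L
  have hclUV : closure U₀ ∩ closure V₀ ⊆ L := by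
    rintro x ⟨hx1, hx2⟩
    by_contra hxL
    rcases (hcomp ▸ hxL : x ∈ U₀ ∪ V₀) with h | h
    · exact disjoint_left.mp (hUV.symm.closure_left hU₀o) hx2 h
    · exact disjoint_left.mp (hUV.closure_left hV₀o) hx1 h
  -- countable families
  set E : ℕ → Set Y := fun n => f '' L ∩ f '' (W n)ᶜ with hEdef
  set Dn : ℕ → Set Y := fun n => f '' (closure U₀ \ W n) ∩ f '' (closure V₀ \ W n) with hDndef
  have hEfin : ∀ n, (E n).Finite := by
    intro n
    exact fc_finite hf hfc hLc (hWo n).isClosed_compl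
      (disjoint_left.mpr fun {x} hx1 hx2 => hx2 (hLW n hx1))
  have hDfin : ∀ n, (Dn n).Finite := by
    intro n
    exact fc_finite hf hfc (isClosed_closure.sdiff (hWo n)) (isClosed_closure.sdiff (hWo n))
      (disjoint_left.mpr fun {x} hx1 hx2 => hx1.2 (hLW n (hclUV ⟨hx1.1, hx2.1⟩)))
  have hkey : closure A ∩ closure B ⊆ ⋃ n, (E n ∪ Dn n) := by
    rintro y ⟨hyA, hyB⟩
    have hynA : y ∉ A := disjoint_left.mp hclBA hyB
    have hynB : y ∉ B := disjoint_left.mp hclAB hyA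
    obtain ⟨xv, hxvm, hxvU⟩ := not_subset.mp hynA
    obtain ⟨xu, hxum, hxuV⟩ := not_subset.mp hynB
    have hxvy : f xv = y := mem_singleton_iff.mp hxvm
    have hxuy : f xu = y := mem_singleton_iff.mp hxum
    by_cases hyL : ∃ xl, xl ∈ L ∧ f xl = y
    · obtain ⟨xl, hxlL, hxly⟩ := hyL
      obtain ⟨x, hxy, hxL⟩ := hstar y
      obtain ⟨n, hn⟩ := hnotL x hxL
      exact mem_iUnion.mpr ⟨n, Or.inl ⟨⟨xl, hxlL, hxly⟩, ⟨x, hn, hxy⟩⟩⟩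
    · push_neg at hyL
      have hxvL : xv ∉ L := fun h => hyL xv h hxvy
      have hxuL : xu ∉ L := fun h => hyL xu h hxuy
      have hxvV : xv ∈ V₀ := by
        rcases (hcomp ▸ hxvL : xv ∈ U₀ ∪ V₀) with h | h
        · exact absurd h hxvU
        · exact h
      have hxuU : xu ∈ U₀ := by
        rcases (hcomp ▸ hxuL : xu ∈ U₀ ∪ V₀) with h | h
        · exact h
        · exact absurd h hxuV
      obtain ⟨n₁, hn₁⟩ := hnotL xu hxuL
      obtain ⟨n₂, hn₂⟩ := hnotL xv hxvL
      refine mem_iUnion.mpr ⟨max n₁ n₂, Or.inr ⟨⟨xu, ⟨subset_closure hxuU, ?_⟩, hxuy⟩,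
        ⟨xv, ⟨subset_closure hxvV, ?_⟩, hxvy⟩⟩⟩
      · exact fun h => hn₁ (hWanti n₁ (max n₁ n₂) (le_max_left _ _) h)
      · exact fun h => hn₂ (hWanti n₂ (max n₁ n₂) (le_max_right _ _) h)
  have hScnt : (closure A ∩ closure B).Countable :=
    Set.Countable.mono hkey (countable_iUnion fun n => ((hEfin n).union (hDfin n)).countable)
  -- A and B are nonempty
  have hAne : A.Nonempty := by
    obtain ⟨x0, hx0⟩ := hune
    exact closure_nonempty_iff.mp ⟨_, ((hPA (f x0) x0 rfl hx0).mem_closure hAo)⟩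
  have hBne : B.Nonempty := by
    obtain ⟨x0, hx0⟩ := hvne
    exact closure_nonempty_iff.mp ⟨_, ((hPB (f x0) x0 rfl hx0).mem_closure hBo)⟩
  -- the intersection of the closures is nonempty
  have hSne : (closure A ∩ closure B).Nonempty := by
    by_contra hS
    rw [not_nonempty_iff_eq_empty] at hS
    have h1' : closure B = (closure A)ᶜ := by
      apply subset_antisymm
      · intro x hx hxA
        have hm : x ∈ closure A ∩ closure B := ⟨hxA, hx⟩
        rw [hS] at hm
        exact hm
      · intro x hx
        rcases (hcov ▸ mem_univ x : x ∈ closure A ∪ closure B) with h | h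
        · exact absurd h hx
        · exact h
    have hclop : IsClopen (closure A) :=
      ⟨isClosed_closure, by rw [← isClosed_compl_iff, ← h1']; exact isClosed_closure⟩
    rcases isClopen_iff.mp hclop with h | h
    · exact (hAne.mono subset_closure).ne_empty h
    · have hBemp : closure B = ∅ := by rw [h1', h, compl_univ]
      exact (hBne.mono subset_closure).ne_empty hBemp
  -- isolated point of the countable compact set
  obtain ⟨s₀, hs₀S, W₀, hW₀o, hW₀S⟩ := exists_isolated_pt
      (isClosed_closure.inter isClosed_closure).isCompact hScnt hSne
  have hs₀W₀ : s₀ ∈ W₀ := by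
    have : s₀ ∈ closure A ∩ closure B ∩ W₀ := by rw [hW₀S]; rfl
    exact this.2
  have hiso : closure A ∩ closure B ∩ W₀ ⊆ {s₀} := hW₀S.subset
  rcases h1 s₀ with hsa | hsb
  · exact end2_aux hAo hBo hABd hcov hAne hs₀S.2
      (disjoint_left.mp hclAB hs₀S.1) hW₀o hs₀W₀ hiso hsa
  · exact end2_aux hBo hAo hABd.symm (by rw [union_comm]; exact hcov) hBne hs₀S.1
      (disjoint_left.mp hclBA hs₀S.2) hW₀o hs₀W₀
      (by rw [inter_comm (closure B)]; exact hiso) hsb
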